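/- Let b be a slowly varying function with associated function γ_b, let 0 < p ≤ ∞, and let α, β be positive reals. Then (α+β)^p γ_b(α+β) ≲ α^p γ_b(α) + β^p γ_b(β), with an implied constant independent of α, β. -/

import Mathlib

open MeasureTheory Set ENNReal Filter Topology

noncomputable section

/-- A measurable function `b : [1,∞) → (0,∞)` is slowly varying if for every `ε > 0`,
`t ^ ε * b t` is equivalent (up to multiplicative constants) to a nondecreasing function
and `t ^ (-ε) * b t` is equivalent to a nonincreasing function on `[1,∞)`. -/
def SlowlyVarying (b : ℝ → ℝ) : Prop :=
  (∀ t : ℝ, 1 ≤ t → 0 < b t) ∧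
  ∀ ε : ℝ, 0 < ε →
    ((∃ g : ℝ → ℝ, MonotoneOn g (Set.Ici 1) ∧ ∃ c > (0:ℝ), ∃ C > (0:ℝ),
        ∀ t : ℝ, 1 ≤ t → c * g t ≤ t ^ ε * b t ∧ t ^ ε * b t ≤ C * g t) ∧
     (∃ g : ℝ → ℝ, AntitoneOn g (Set.Ici 1) ∧ ∃ c > (0:ℝ), ∃ C > (0:ℝ),
        ∀ t : ℝ, 1 ≤ t → c * g t ≤ t ^ (-ε) * b t ∧ t ^ (-ε) * b t ≤ C * g t))

/-- `γ_b(t) = b (max {t, t⁻¹})` for `t > 0`. -/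
def gammaB (b : ℝ → ℝ) (t : ℝ) : ℝ := b (max t t⁻¹)

lemma slowly_comp (b : ℝ → ℝ) (hb : SlowlyVarying b) :
    ∃ K > (0:ℝ), ∀ u v : ℝ, 1 ≤ u → 1 ≤ v → u ≤ 2 * v → v ≤ 2 * u → b u ≤ K * b v := by
  obtain ⟨hpos, h⟩ := hb
  obtain ⟨⟨g, hg, c, hc, C, hC, hbd⟩, ⟨h2, hh, c', hc', C', hC', hbd'⟩⟩ := h 1 one_pos
  refine ⟨2 * (C / c) + 2 * (C' / c'), by positivity, ?_⟩
  intro u v hu1 hv1 huv hvu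
  have hu0 : (0:ℝ) < u := lt_of_lt_of_le one_pos hu1
  have hv0 : (0:ℝ) < v := lt_of_lt_of_le one_pos hv1
  have hbu : 0 < b u := hpos u hu1
  have hbv : 0 < b v := hpos v hv1
  have e1 : u ^ (-(1:ℝ)) = u⁻¹ := Real.rpow_neg_one u
  have e2 : v ^ (-(1:ℝ)) = v⁻¹ := Real.rpow_neg_one v
  have e3 : u ^ (1:ℝ) = u := Real.rpow_one u
  have e4 : v ^ (1:ℝ) = v := Real.rpow_one v
  rcases le_total u v with hle | hle
  · -- use monotone g : u * b u ≤ C g u ≤ C g v ≤ (C/c) v * b v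
    have h1 : u ^ (1:ℝ) * b u ≤ C * g u := (hbd u hu1).2
    have h2' : g u ≤ g v := hg hu1 hv1 hle
    have h3 : c * g v ≤ v ^ (1:ℝ) * b v := (hbd v hv1).1
    rw [e3] at h1; rw [e4] at h3
    have hbub : u * b u ≤ (C / c) * (v * b v) := by
      have : C * g v ≤ (C/c) * (v * b v) := by
        rw [div_mul_eq_mul_div, le_div_iff₀ hc]
        nlinarith
      nlinarith
    -- b u = (u * b u)/u ≤ (C/c) * (v/u) * b v ≤ (C/c)*2*b v using v ≤ 2u
    have hfin : b u ≤ 2 * (C / c) * b v := by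
      have hub : u * b u ≤ (C/c) * (2 * u * b v) := by nlinarith [mul_pos (div_pos hC hc) hbv]
      nlinarith [mul_pos (div_pos hC hc) hbv]
    nlinarith [mul_pos (div_pos hC' hc') hbv]
  · -- v ≤ u, use antitone
    have h1 : u ^ (-(1:ℝ)) * b u ≤ C' * h2 u := (hbd' u hu1).2
    have h2' : h2 u ≤ h2 v := hh hv1 hu1 hle
    have h3 : c' * h2 v ≤ v ^ (-(1:ℝ)) * b v := (hbd' v hv1).1
    rw [e1] at h1; rw [e2] at h3
    have hiu : u⁻¹ * b u ≤ (C'/c') * (v⁻¹ * b v) := by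
      have : C' * h2 v ≤ (C'/c') * (v⁻¹ * b v) := by
        rw [div_mul_eq_mul_div, le_div_iff₀ hc']
        nlinarith
      nlinarith
    have hfin : b u ≤ 2 * (C'/c') * b v := by
      have h5 : b u = u * (u⁻¹ * b u) := by field_simp
      have h6 : u * (u⁻¹ * b u) ≤ u * ((C'/c') * (v⁻¹ * b v)) := by
        exact mul_le_mul_of_nonneg_left hiu (le_of_lt hu0)
      have h7 : u * ((C'/c') * (v⁻¹ * b v)) ≤ 2 * v * ((C'/c') * (v⁻¹ * b v)) := by
        apply mul_le_mul_of_nonneg_right huv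
        positivity
      have h8 : 2 * v * ((C'/c') * (v⁻¹ * b v)) = 2 * (C'/c') * b v := by field_simp
      linarith [h5 ▸ le_trans h6 (h7.trans_eq h8)]
    nlinarith [mul_pos (div_pos hC hc) hbv]

/-- For a slowly varying `b`, `0 < p` and positive `α, β`,
`(α+β)^p γ_b(α+β) ≲ α^p γ_b(α) + β^p γ_b(β)` with constant independent of `α, β`. -/
theorem gammaB_add_le (b : ℝ → ℝ) (hb : SlowlyVarying b) (p : ℝ) (hp : 0 < p) :
    ∃ C > (0:ℝ), ∀ α β : ℝ, 0 < α → 0 < β →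
      (α + β) ^ p * gammaB b (α + β) ≤
        C * (α ^ p * gammaB b α + β ^ p * gammaB b β) := by
  obtain ⟨K, hK, hcomp⟩ := slowly_comp b hb
  have hpos := hb.1
  have one_le_max : ∀ t : ℝ, 0 < t → 1 ≤ max t t⁻¹ := by
    intro t ht
    rcases le_total 1 t with h | h
    · exact le_max_of_le_left h
    · exact le_max_of_le_right ((one_le_inv₀ ht).2 h)
  have key : ∀ α β : ℝ, 0 < α → 0 < β → α ≤ β →
      (α + β) ^ p * gammaB b (α + β) ≤ (2 ^ p * K) * (β ^ p * gammaB b β) := by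
    intro α β ha hbp hab
    set t := α + β with htdef
    have ht0 : 0 < t := by positivity
    have hst : β ≤ t := by linarith
    have ht2 : t ≤ 2 * β := by linarith
    set u := max t t⁻¹ with hudef
    set v := max β β⁻¹ with hvdef
    have hu1 : 1 ≤ u := one_le_max t ht0
    have hv1 : 1 ≤ v := one_le_max β hbp
    have huv : u ≤ 2 * v := by
      apply max_le
      · calc t ≤ 2 * β := ht2
          _ ≤ 2 * v := by have := le_max_left β β⁻¹; linarith
      · have h1 : t⁻¹ ≤ β⁻¹ := inv_anti₀ hbp hst
        have h2 : β⁻¹ ≤ v := le_max_right _ _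
        linarith
    have hvu : v ≤ 2 * u := by
      apply max_le
      · have h1 : t ≤ u := le_max_left _ _
        linarith
      · have h1 : β⁻¹ ≤ 2 * t⁻¹ := by
          have hx : t * (t⁻¹ * β⁻¹) ≤ 2 * β * (t⁻¹ * β⁻¹) :=
            mul_le_mul_of_nonneg_right ht2 (by positivity)
          have e1' : t * (t⁻¹ * β⁻¹) = β⁻¹ := by field_simp
          have e2' : 2 * β * (t⁻¹ * β⁻¹) = 2 * t⁻¹ := by field_simp
          rw [e1', e2'] at hx
          exact hx
        have h2 : t⁻¹ ≤ u := le_max_right _ _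
        linarith
    have hcb : b u ≤ K * b v := hcomp u v hu1 hv1 huv hvu
    have hbu : 0 < b u := hpos u hu1
    have hbv : 0 < b v := hpos v hv1
    have hrp : t ^ p ≤ 2 ^ p * β ^ p := by
      calc t ^ p ≤ (2 * β) ^ p := Real.rpow_le_rpow (le_of_lt ht0) ht2 (le_of_lt hp)
        _ = 2 ^ p * β ^ p := Real.mul_rpow (by norm_num) (le_of_lt hbp)
    have htp : (0:ℝ) < t ^ p := Real.rpow_pos_of_pos ht0 p
    have hbp2 : (0:ℝ) < β ^ p := Real.rpow_pos_of_pos hbp p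
    show t ^ p * b u ≤ 2 ^ p * K * (β ^ p * b v)
    calc t ^ p * b u ≤ (2 ^ p * β ^ p) * (K * b v) := by
          apply mul_le_mul hrp hcb (le_of_lt hbu)
          positivity
      _ = 2 ^ p * K * (β ^ p * b v) := by ring
  refine ⟨2 ^ p * K, by positivity, ?_⟩
  intro α β ha hbp
  rcases le_total α β with h | h
  · have := key α β ha hbp h
    have h2 : 0 < α ^ p * gammaB b α := by
      have := hpos (max α α⁻¹) (one_le_max α ha)
      have := Real.rpow_pos_of_pos ha p
      unfold gammaB; positivity
    nlinarith [mul_pos (mul_pos (Real.rpow_pos_of_pos (by norm_num : (0:ℝ) < 2) p) hK) h2]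
  · have := key β α hbp ha h
    rw [show α + β = β + α from add_comm α β]
    have h2 : 0 < β ^ p * gammaB b β := by
      have := hpos (max β β⁻¹) (one_le_max β hbp)
      have := Real.rpow_pos_of_pos hbp p
      unfold gammaB; positivity
    nlinarith [mul_pos (mul_pos (Real.rpow_pos_of_pos (by norm_num : (0:ℝ) < 2) p) hK) h2]
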